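/- arXiv:2407.14017 — 5 statements merged into one kernel-verified Lean document; each statement's English description precedes it below -/
import Mathlib

section
/- (Bubble Characterization Lemma, discrete time) Suppose q_t > 0, P_t > 0, D_t ≥ 0 satisfy q_t P_t = q_{t+1}(P_{t+1} + D_{t+1}) for all t, with q_0 = 1. Then lim_{T→∞} q_T P_T > 0 (i.e., a rational bubble exists) if and only if Σ_{t=1}^∞ D_t / P_t < ∞. -/
/-- Bubble Characterization Lemma (discrete time): lim q_T P_T > 0 iff
Σ D_t / P_t < ∞. -/
theorem stmt_4 (q P D : ℕ → ℝ)
    (hq : ∀ t, 0 < q t) (hq0 : q 0 = 1) (hP : ∀ t, 0 < P t) (hD : ∀ t, 0 ≤ D t)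
    (hna : ∀ t, q t * P t = q (t + 1) * (P (t + 1) + D (t + 1))) :
    (∃ b : ℝ, 0 < b ∧
      Filter.Tendsto (fun T => q T * P T) Filter.atTop (nhds b)) ↔
    Summable (fun t : ℕ => D (t + 1) / P (t + 1)) := by
  set x : ℕ → ℝ := fun t => q t * P t with hxdef
  set r : ℕ → ℝ := fun t => D (t + 1) / P (t + 1) with hrdef
  have hr : ∀ t, 0 ≤ r t := fun t => div_nonneg (hD _) (hP _).le
  have hxpos : ∀ t, 0 < x t := fun t => mul_pos (hq t) (hP t)
  have hkey : ∀ t, x t = x (t + 1) * (1 + r t) := by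
    intro t
    have hPne : P (t + 1) ≠ 0 := (hP _).ne'
    simp only [hxdef, hrdef]
    rw [hna t]
    field_simp
  have hx0 : ∀ T, x 0 = x T * ∏ t ∈ Finset.range T, (1 + r t) := by
    intro T
    induction T with
    | zero => simp
    | succ T ih =>
      rw [ih, Finset.prod_range_succ, hkey T]; ring
  have hfac : ∀ t, (1:ℝ) ≤ 1 + r t := fun t => by linarith [hr t]
  have hprod_ge_one : ∀ T, (1:ℝ) ≤ ∏ t ∈ Finset.range T, (1 + r t) := by
    intro T
    calc (1:ℝ) = ∏ t ∈ Finset.range T, 1 := by simp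
    _ ≤ _ := Finset.prod_le_prod (by intros; norm_num) (fun t _ => hfac t)
  have hprod_pos : ∀ T, (0:ℝ) < ∏ t ∈ Finset.range T, (1 + r t) :=
    fun T => lt_of_lt_of_le one_pos (hprod_ge_one T)
  have hsum_le_prod : ∀ T, ∑ t ∈ Finset.range T, r t ≤ ∏ t ∈ Finset.range T, (1 + r t) := by
    intro T
    induction T with
    | zero => simp
    | succ T ih =>
      rw [Finset.sum_range_succ, Finset.prod_range_succ]
      have h1 := hprod_ge_one T
      have h2 := hr T
      nlinarith
  have hprod_le_exp : ∀ T, ∏ t ∈ Finset.range T, (1 + r t)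
      ≤ Real.exp (∑ t ∈ Finset.range T, r t) := by
    intro T
    rw [Real.exp_sum]
    exact Finset.prod_le_prod (fun t _ => by linarith [hfac t])
      (fun t _ => by linarith [Real.add_one_le_exp (r t)])
  have hanti : Antitone x := by
    apply antitone_nat_of_succ_le
    intro n
    have := hkey n
    nlinarith [hxpos (n+1), hr n, hfac n]
  constructor
  · rintro ⟨b, hb, htend⟩
    have hblex : ∀ T, b ≤ x T := fun T => hanti.le_of_tendsto htend T
    apply summable_of_sum_range_le hr (c := x 0 / b)
    intro T
    have h0 := hx0 T
    have h1 := hsum_le_prod T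
    have h2 := hblex T
    rw [le_div_iff₀ hb]
    nlinarith [hprod_pos T]
  · intro hsum
    have hS : ∀ T, ∑ t ∈ Finset.range T, r t ≤ ∑' t, r t :=
      fun T => Summable.sum_le_tsum (Finset.range T) (fun t _ => hr t) hsum
    -- lower bound on x
    have hlow : ∀ T, x 0 / Real.exp (∑' t, r t) ≤ x T := by
      intro T
      have h0 := hx0 T
      have h1 := (hprod_le_exp T).trans (Real.exp_le_exp.mpr (hS T))
      rw [div_le_iff₀ (Real.exp_pos _)]
      nlinarith [hprod_pos T, hxpos T]
    have hbdd : BddBelow (Set.range x) := ⟨x 0 / Real.exp (∑' t, r t), by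
      rintro y ⟨T, rfl⟩; exact hlow T⟩
    refine ⟨⨅ T, x T, ?_, tendsto_atTop_ciInf hanti hbdd⟩
    have hc : 0 < x 0 / Real.exp (∑' t, r t) := div_pos (hxpos 0) (Real.exp_pos _)
    exact lt_of_lt_of_le hc (le_ciInf hlow)
end

section
/- If the dividend yield D_t/P_t converges to a positive constant c > 0, then Σ_{t=1}^∞ D_t/P_t = ∞; consequently, under the no-arbitrage equation q_t P_t = q_{t+1}(P_{t+1}+D_{t+1}) with P_t > 0, q_t > 0, the transversality condition lim_{T→∞} q_T P_T = 0 holds (no rational bubble). -/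
/-- If the dividend yield converges to c > 0 then Σ D_t/P_t = ∞ and the
transversality condition holds (no rational bubble). -/
theorem stmt_6 (q P D : ℕ → ℝ) (c : ℝ) (hc : 0 < c)
    (hq : ∀ t, 0 < q t) (hq0 : q 0 = 1) (hP : ∀ t, 0 < P t) (hD : ∀ t, 0 ≤ D t)
    (hna : ∀ t, q t * P t = q (t + 1) * (P (t + 1) + D (t + 1)))
    (hyield : Filter.Tendsto (fun t => D t / P t) Filter.atTop (nhds c)) :
    ¬ Summable (fun t : ℕ => D (t + 1) / P (t + 1)) ∧
    Filter.Tendsto (fun T => q T * P T) Filter.atTop (nhds 0) := by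
  have ha : ∀ t, 0 < q t * P t := fun t => mul_pos (hq t) (hP t)
  -- key recursion: q t * P t = (q (t+1) * P (t+1)) * (1 + D (t+1) / P (t+1))
  have hrec : ∀ t, q t * P t = (q (t+1) * P (t+1)) * (1 + D (t+1) / P (t+1)) := by
    intro t
    have hPpos := (hP (t+1)).ne'
    rw [hna t]
    field_simp
  constructor
  · intro hs
    have h0 : Filter.Tendsto (fun t : ℕ => D (t+1) / P (t+1)) Filter.atTop (nhds 0) :=
      hs.tendsto_atTop_zero
    have hcshift : Filter.Tendsto (fun t : ℕ => D (t+1) / P (t+1)) Filter.atTop (nhds c) :=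
      hyield.comp (Filter.tendsto_add_atTop_nat 1)
    exact hc.ne' (tendsto_nhds_unique hcshift h0)
  · -- eventually yield ≥ c/2
    have hev : ∀ᶠ t in Filter.atTop, c/2 < D t / P t :=
      hyield.eventually (eventually_gt_nhds (by linarith))
    obtain ⟨N, hN⟩ := Filter.eventually_atTop.mp hev
    set r : ℝ := 1 / (1 + c/2) with hr
    have hr0 : 0 < r := by positivity
    have hr1 : r < 1 := by
      rw [hr, div_lt_one (by linarith)]; linarith
    have hbound : ∀ k, q (N+k) * P (N+k) ≤ (q N * P N) * r ^ k := by
      intro k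
      induction k with
      | zero => simp
      | succ k ih =>
        have hk1 : N ≤ N + k + 1 := by omega
        have hy : c/2 < D (N+k+1) / P (N+k+1) := hN _ hk1
        have h1 : (q (N+k+1) * P (N+k+1)) * (1 + c/2) ≤ q (N+k) * P (N+k) := by
          rw [hrec (N+k)]
          have := (ha (N+k+1)).le
          nlinarith [ha (N+k+1)]
        have h2 : q (N+k+1) * P (N+k+1) ≤ (q (N+k) * P (N+k)) * r := by
          rw [hr, mul_one_div, le_div_iff₀ (by linarith : (0:ℝ) < 1 + c/2)]
          linarith
        calc q (N+(k+1)) * P (N+(k+1)) = q (N+k+1) * P (N+k+1) := by ring_nf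
          _ ≤ (q (N+k) * P (N+k)) * r := h2
          _ ≤ ((q N * P N) * r ^ k) * r := by
              exact mul_le_mul_of_nonneg_right ih hr0.le
          _ = (q N * P N) * r ^ (k+1) := by ring
    have hbound' : ∀ᶠ t in Filter.atTop, q t * P t ≤ (q N * P N) * r ^ (t - N) := by
      refine Filter.eventually_atTop.mpr ⟨N, fun t ht => ?_⟩
      have := hbound (t - N)
      rwa [Nat.add_sub_cancel' ht] at this
    have hgeo : Filter.Tendsto (fun t : ℕ => (q N * P N) * r ^ (t - N)) Filter.atTop (nhds 0) := by
      have h1 : Filter.Tendsto (fun k : ℕ => (q N * P N) * r ^ k) Filter.atTop (nhds 0) := by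
        simpa using (tendsto_pow_atTop_nhds_zero_of_lt_one hr0.le hr1).const_mul (q N * P N)
      exact h1.comp (Filter.tendsto_sub_atTop_nat N)
    refine squeeze_zero' ?_ hbound' hgeo
    exact Filter.Eventually.of_forall fun t => (ha t).le
end

section
/- (Continuous-time Bubble Characterization) Let q, P: [0,∞) → (0,∞) be continuously differentiable with q(0) = 1, and let f: [0,∞) → [0,∞) be continuous, satisfying the no-arbitrage ODE d/dt (q_t P_t) = -q_t f(t). Then q_T P_T = q_0 P_0 · exp(-∫_0^T f(t)/P_t dt) for all T; consequently lim_{T→∞} q_T P_T = 0 if and only if ∫_0^∞ f(t)/P_t dt = ∞. -/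
/-- Continuous-time Bubble Characterization:
q_T P_T = q_0 P_0 exp(-∫_0^T f/P), and lim q_T P_T = 0 iff ∫_0^∞ f/P = ∞. -/
theorem stmt_12 (q P f : ℝ → ℝ)
    (hq : ∀ t, 0 < q t) (hq0 : q 0 = 1) (hP : ∀ t, 0 < P t)
    (hqc : Continuous q) (hPc : Continuous P)
    (hf : Continuous f) (hf0 : ∀ t, 0 ≤ f t)
    (hna : ∀ t, HasDerivAt (fun s => q s * P s) (-(q t * f t)) t) :
    (∀ T : ℝ, q T * P T =
      q 0 * P 0 * Real.exp (-(∫ t in (0:ℝ)..T, f t / P t))) ∧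
    (Filter.Tendsto (fun T => q T * P T) Filter.atTop (nhds 0) ↔
      Filter.Tendsto (fun T => ∫ t in (0:ℝ)..T, f t / P t)
        Filter.atTop Filter.atTop) := by
  have hg : ∀ t, 0 < q t * P t := fun t => mul_pos (hq t) (hP t)
  have hlog : ∀ t, HasDerivAt (fun s => Real.log (q s * P s)) (-(f t / P t)) t := by
    intro t
    have h := (hna t).log (ne_of_gt (hg t))
    convert h using 1
    rw [neg_div, mul_div_mul_left _ _ (ne_of_gt (hq t))]
  have hcont : Continuous fun t => f t / P t :=
    hf.div hPc (fun t => ne_of_gt (hP t))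
  have key : ∀ T : ℝ, (∫ t in (0:ℝ)..T, f t / P t) =
      Real.log (q 0 * P 0) - Real.log (q T * P T) := by
    intro T
    have := intervalIntegral.integral_eq_sub_of_hasDerivAt
      (f := fun s => Real.log (q s * P s)) (f' := fun t => -(f t / P t))
      (fun t _ => hlog t) ((hcont.neg).intervalIntegrable 0 T)
    have h2 : (∫ t in (0:ℝ)..T, -(f t / P t)) = -(∫ t in (0:ℝ)..T, f t / P t) :=
      intervalIntegral.integral_neg
    rw [h2] at this
    linarith
  have main : ∀ T : ℝ, q T * P T =
      q 0 * P 0 * Real.exp (-(∫ t in (0:ℝ)..T, f t / P t)) := by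
    intro T
    rw [key T]
    rw [neg_sub, Real.exp_sub, Real.exp_log (hg T), Real.exp_log (hg 0)]
    rw [mul_div_cancel₀ _ (ne_of_gt (hg 0))]
  refine ⟨main, ?_⟩
  have heq : (fun T => q T * P T) =
      fun T => Real.exp (-(∫ t in (0:ℝ)..T, f t / P t) + Real.log (q 0 * P 0)) := by
    funext T
    rw [Real.exp_add, Real.exp_log (hg 0), main T]; ring
  rw [heq, Real.tendsto_exp_comp_nhds_zero]
  constructor
  · intro h
    have h2 := Filter.tendsto_atBot_add_const_right Filter.atTop
      (-Real.log (q 0 * P 0)) h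
    simp only [add_assoc, add_neg_cancel, add_zero] at h2
    exact Filter.tendsto_neg_atBot_iff.mp h2
  · intro h
    exact Filter.tendsto_atBot_add_const_right Filter.atTop _
      (Filter.tendsto_neg_atBot_iff.mpr h)
end

section
/- In the continuous-time setting, if the asset price P_t and dividend rate D_t converge to positive constants P > 0 and D > 0, then ∫_0^∞ D_t/P_t dt = ∞, and hence under the no-arbitrage ODE d/dt(q_t P_t) = -q_t D_t with q_0 = 1, q_t > 0, P_t > 0, the transversality condition lim_{T→∞} q_T P_T = 0 holds (no rational bubble). -/
/-- If the price and dividend rate converge to positive constants, then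
∫_0^∞ D_t/P_t dt = ∞ and the transversality condition holds. -/
theorem stmt_13 (q P D : ℝ → ℝ) (Pinf Dinf : ℝ) (hPinf : 0 < Pinf) (hDinf : 0 < Dinf)
    (hq : ∀ t, 0 < q t) (hq0 : q 0 = 1) (hP : ∀ t, 0 < P t) (hD : ∀ t, 0 ≤ D t)
    (hqc : Continuous q) (hPc : Continuous P) (hDc : Continuous D)
    (hPlim : Filter.Tendsto P Filter.atTop (nhds Pinf))
    (hDlim : Filter.Tendsto D Filter.atTop (nhds Dinf))
    (hna : ∀ t, HasDerivAt (fun s => q s * P s) (-(q t * D t)) t) :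
    Filter.Tendsto (fun T => ∫ t in (0:ℝ)..T, D t / P t)
      Filter.atTop Filter.atTop ∧
    Filter.Tendsto (fun T => q T * P T) Filter.atTop (nhds 0) := by
  set g : ℝ → ℝ := fun t => D t / P t with hg_def
  have hgc : Continuous g := hDc.div hPc fun t => (hP t).ne'
  have hgint : ∀ a b : ℝ, IntervalIntegrable g MeasureTheory.volume a b :=
    fun a b => hgc.intervalIntegrable a b
  set c : ℝ := Dinf / Pinf with hc_def
  have hc : 0 < c := div_pos hDinf hPinf
  have hglim : Filter.Tendsto g Filter.atTop (nhds c) := hDlim.div hPlim hPinf.ne'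
  -- eventually g ≥ c/2
  have hev : ∀ᶠ t in Filter.atTop, c / 2 ≤ g t :=
    hglim.eventually (eventually_ge_nhds (by linarith))
  obtain ⟨A, hA⟩ := hev.exists_forall_of_atTop
  -- Part 1
  have hdiv : Filter.Tendsto (fun T => ∫ t in (0:ℝ)..T, g t) Filter.atTop Filter.atTop := by
    have hlb : Filter.Tendsto (fun T => (∫ t in (0:ℝ)..A, g t) + c / 2 * (T - A))
        Filter.atTop Filter.atTop := by
      apply Filter.tendsto_atTop_add_const_left
      apply Filter.Tendsto.const_mul_atTop (by linarith : (0:ℝ) < c / 2)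
      exact Filter.tendsto_atTop_add_const_right _ _ Filter.tendsto_id
    apply Filter.tendsto_atTop_mono' _ _ hlb
    filter_upwards [Filter.eventually_ge_atTop A] with T hT
    have h1 : (∫ t in (0:ℝ)..T, g t) =
        (∫ t in (0:ℝ)..A, g t) + ∫ t in A..T, g t :=
      (intervalIntegral.integral_add_adjacent_intervals (hgint 0 A) (hgint A T)).symm
    rw [h1]
    have h2 : c / 2 * (T - A) = ∫ _t in A..T, (c / 2 : ℝ) := by
      rw [intervalIntegral.integral_const, smul_eq_mul]; ring
    rw [h2]
    gcongr
    exact intervalIntegral.integral_mono_on hT (intervalIntegrable_const) (hgint A T)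
      fun x hx => hA x hx.1
  refine ⟨hdiv, ?_⟩
  -- Part 2
  set F : ℝ → ℝ := fun T => ∫ t in (0:ℝ)..T, g t with hF_def
  have hF' : ∀ T, HasDerivAt F (g T) T := fun T =>
    intervalIntegral.integral_hasDerivAt_right (hgint 0 T)
      (hgc.stronglyMeasurableAtFilter _ _) hgc.continuousAt
  set G : ℝ → ℝ := fun T => q T * P T * Real.exp (F T) with hG_def
  have hG' : ∀ T, HasDerivAt G 0 T := by
    intro T
    have h1 : HasDerivAt (fun s => Real.exp (F s)) (Real.exp (F T) * g T) T :=
      (Real.hasDerivAt_exp (F T)).comp T (hF' T)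
    have h2 := (hna T).mul h1
    refine h2.congr_deriv ?_
    have hPT := (hP T).ne'
    simp only [hg_def]
    field_simp
    ring
  have hGconst : ∀ T, G T = P 0 := by
    intro T
    have : G T = G 0 :=
      is_const_of_deriv_eq_zero (fun x => (hG' x).differentiableAt)
        (fun x => (hG' x).deriv) T 0
    rw [this]
    simp [hG_def, hF_def, hq0]
  have hqP : ∀ T, q T * P T = P 0 * Real.exp (-(F T)) := by
    intro T
    have := hGconst T
    rw [Real.exp_neg]
    simp only [hG_def] at this
    field_simp
    linarith [this]
  have hexp : Filter.Tendsto (fun T => Real.exp (-(F T))) Filter.atTop (nhds 0) :=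
    Real.tendsto_exp_atBot.comp (Filter.tendsto_neg_atBot_iff.mpr hdiv)
  have := (tendsto_const_nhds (x := P 0)).mul hexp
  rw [mul_zero] at this
  exact this.congr fun T => (hqP T).symm
end

section
/- Suppose (P_t), (D_t), (q_t) satisfy the deterministic no-arbitrage equation q_t P_t = q_{t+1}(P_{t+1} + D_{t+1}) with q_t > 0, P_t > 0, q_0 = 1, and suppose there exists c > 0 and T_0 such that D_t/P_t ≥ c for all t ≥ T_0. Then q_T P_T ≤ q_{T_0} P_{T_0} (1+c)^{-(T-T_0)} for T ≥ T_0, so q_T P_T → 0 exponentially fast and there is no rational bubble. -/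
/-- If the dividend yield is bounded below by c > 0 eventually, then
q_T P_T decays at least geometrically, so there is no rational bubble. -/
theorem stmt_18 (q P D : ℕ → ℝ) (c : ℝ) (hc : 0 < c) (T₀ : ℕ)
    (hq : ∀ t, 0 < q t) (hq0 : q 0 = 1) (hP : ∀ t, 0 < P t) (hD : ∀ t, 0 ≤ D t)
    (hna : ∀ t, q t * P t = q (t + 1) * (P (t + 1) + D (t + 1)))
    (hyield : ∀ t, T₀ ≤ t → c ≤ D t / P t) :
    (∀ T, T₀ ≤ T → q T * P T ≤ q T₀ * P T₀ * ((1 + c) ^ (T - T₀))⁻¹) ∧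
    Filter.Tendsto (fun T => q T * P T) Filter.atTop (nhds 0) := by
  have h1c : (0:ℝ) < 1 + c := by linarith
  have step : ∀ t, T₀ ≤ t + 1 → (1 + c) * (q (t+1) * P (t+1)) ≤ q t * P t := by
    intro t ht
    have hy := hyield (t+1) ht
    have hD1 : c * P (t+1) ≤ D (t+1) := by
      rw [le_div_iff₀ (hP (t+1))] at hy; linarith
    have := hna t
    nlinarith [hq (t+1), hP (t+1)]
  have key : ∀ T, T₀ ≤ T → q T * P T ≤ q T₀ * P T₀ * ((1 + c) ^ (T - T₀))⁻¹ := by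
    intro T hT
    induction T, hT using Nat.le_induction with
    | base => simp
    | succ n hn ih =>
      have hs := step n (by omega)
      have : q (n+1) * P (n+1) ≤ (q n * P n) / (1 + c) := by
        rw [le_div_iff₀ h1c]; linarith
      refine this.trans ?_
      rw [div_le_iff₀ h1c]
      have hpos : (0:ℝ) < (1+c) ^ (n - T₀) := pow_pos h1c _
      have hrw : n + 1 - T₀ = (n - T₀) + 1 := by omega
      rw [hrw, pow_succ]
      calc q n * P n ≤ q T₀ * P T₀ * ((1 + c) ^ (n - T₀))⁻¹ := ih
        _ = q T₀ * P T₀ * ((1 + c) ^ (n - T₀) * (1 + c))⁻¹ * (1 + c) := by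
            field_simp
  refine ⟨key, ?_⟩
  have hbnd : Filter.Tendsto (fun T => q T₀ * P T₀ * ((1 + c) ^ (T - T₀))⁻¹)
      Filter.atTop (nhds 0) := by
    have h1 : Filter.Tendsto (fun n : ℕ => ((1 + c)⁻¹) ^ n) Filter.atTop (nhds 0) := by
      apply tendsto_pow_atTop_nhds_zero_of_lt_one
      · positivity
      · rw [inv_lt_one_iff₀]; right; linarith
    have h2 : Filter.Tendsto (fun T : ℕ => T - T₀) Filter.atTop Filter.atTop :=
      Filter.tendsto_sub_atTop_nat T₀
    have h3 := (h1.comp h2).const_mul (q T₀ * P T₀)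
    simpa [inv_pow] using h3
  refine squeeze_zero' ?_ ?_ hbnd
  · filter_upwards with T
    exact le_of_lt (mul_pos (hq T) (hP T))
  · filter_upwards [Filter.eventually_ge_atTop T₀] with T hT using key T hT
end
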